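/- For ν > 0, γ > 0, α > 0, λ ∈ ℝ and s > 0, the Laplace transform identity ∫_0^∞ e^{-s x} x^{γ-1} E_{α;ν,γ}(λ x^ν) dx = s^{-γ} E_{α-1;ν,γ}(λ / s^ν) holds, where E_{α;ν,γ}(z) = ∑_{k=0}^∞ z^k / Γ(νk+γ)^{α+1}. -/

import Mathlib

open MeasureTheory Real

private lemma gamma_lower {ν : ℝ} (hν : 0 < ν) {x : ℝ} (hx : 2 ≤ x) :
    Real.Gamma x * x ^ (min ν 1) / 2 ≤ Real.Gamma (x + ν) := by
  set ν' := min ν 1 with hν'def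
  have hν'0 : 0 < ν' := lt_min hν one_pos
  have hν'1 : ν' ≤ 1 := min_le_right _ _
  have hx0 : (0:ℝ) < x := by linarith
  have hxν' : (0:ℝ) < x + ν' := by linarith
  have hG1 : 0 < Real.Gamma (x + ν') := Real.Gamma_pos_of_pos hxν'
  have hGx : 0 < Real.Gamma x := Real.Gamma_pos_of_pos hx0
  have hpt : ν' • (x + ν') + (1 - ν') • (x + ν' + 1) = x + 1 := by
    simp only [smul_eq_mul]; ring
  have hconv := Real.convexOn_log_Gamma.2 (Set.mem_Ioi.2 hxν')
      (Set.mem_Ioi.2 (by linarith : (0:ℝ) < x + ν' + 1)) hν'0.le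
      (by linarith : (0:ℝ) ≤ 1 - ν') (by ring)
  rw [hpt] at hconv
  have hlog : Real.log (Real.Gamma (x + 1)) ≤
      ν' * Real.log (Real.Gamma (x + ν')) + (1 - ν') * Real.log (Real.Gamma (x + ν' + 1)) := by
    simpa [Function.comp] using hconv
  have h1 : Real.Gamma (x + 1) ≤
      Real.Gamma (x + ν') ^ ν' * Real.Gamma (x + ν' + 1) ^ (1 - ν') := by
    have h := Real.exp_le_exp.2 hlog
    rw [Real.exp_log (Real.Gamma_pos_of_pos (by linarith)), Real.exp_add,
      mul_comm ν', mul_comm (1 - ν'), ← Real.rpow_def_of_pos hG1,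
      ← Real.rpow_def_of_pos (Real.Gamma_pos_of_pos (by linarith))] at h
    exact h
  have h2 : Real.Gamma (x + ν' + 1) = (x + ν') * Real.Gamma (x + ν') :=
    Real.Gamma_add_one hxν'.ne'
  have h3 : Real.Gamma (x + ν') ^ ν' * Real.Gamma (x + ν' + 1) ^ (1 - ν')
      = Real.Gamma (x + ν') * (x + ν') ^ (1 - ν') := by
    rw [h2, Real.mul_rpow hxν'.le hG1.le, ← mul_assoc,
      mul_comm (Real.Gamma (x + ν') ^ ν'), mul_assoc, ← Real.rpow_add hG1]
    ring_nf
    rw [Real.rpow_one]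
  have h4 : x * Real.Gamma x ≤ Real.Gamma (x + ν') * (x + ν') ^ (1 - ν') := by
    calc x * Real.Gamma x = Real.Gamma (x + 1) := (Real.Gamma_add_one hx0.ne').symm
      _ ≤ _ := h1.trans (le_of_eq h3)
  -- bound (x+ν')^(1-ν') ≤ 2 * x^(1-ν')
  have h5 : (x + ν') ^ (1 - ν') ≤ 2 * x ^ (1 - ν') := by
    calc (x + ν') ^ (1 - ν') ≤ (2 * x) ^ (1 - ν') :=
          Real.rpow_le_rpow hxν'.le (by linarith) (by linarith)
      _ = 2 ^ (1 - ν') * x ^ (1 - ν') := Real.mul_rpow (by norm_num) hx0.le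
      _ ≤ 2 * x ^ (1 - ν') := by
          have h2' : (2:ℝ) ^ (1 - ν') ≤ 2 ^ (1:ℝ) :=
            Real.rpow_le_rpow_of_exponent_le (by norm_num) (by linarith)
          rw [Real.rpow_one] at h2'
          exact mul_le_mul_of_nonneg_right h2' (Real.rpow_nonneg hx0.le _)
  have hxsplit : x ^ ν' * x ^ (1 - ν') = x := by
    rw [← Real.rpow_add hx0]; simp
  have hpow_pos : 0 < x ^ (1 - ν') := Real.rpow_pos_of_pos hx0 _
  have key : x ^ ν' * Real.Gamma x ≤ 2 * Real.Gamma (x + ν') := by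
    rw [← mul_le_mul_iff_of_pos_right hpow_pos]
    calc x ^ ν' * Real.Gamma x * x ^ (1 - ν')
        = x * Real.Gamma x := by rw [mul_right_comm, hxsplit]
      _ ≤ Real.Gamma (x + ν') * (x + ν') ^ (1 - ν') := h4
      _ ≤ Real.Gamma (x + ν') * (2 * x ^ (1 - ν')) :=
          mul_le_mul_of_nonneg_left h5 hG1.le
      _ = 2 * Real.Gamma (x + ν') * x ^ (1 - ν') := by ring
  have hmono : Real.Gamma (x + ν') ≤ Real.Gamma (x + ν) := by
    rcases eq_or_lt_of_le (min_le_left ν 1 : ν' ≤ ν) with h | h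
    · exact le_of_eq (by rw [hν'def, h])
    · exact (Real.Gamma_strictMonoOn_Ici (by simp only [Set.mem_Ici]; linarith)
        (by simp only [Set.mem_Ici]; linarith) (by linarith)).le
  nlinarith [key, hmono]

private lemma summable_aux {ν γ α : ℝ} (hν : 0 < ν) (hγ : 0 < γ) (hα : 0 < α)
    {c : ℝ} (hc : 0 ≤ c) :
    Summable (fun k : ℕ => c ^ k / Real.Gamma (ν * k + γ) ^ α) := by
  have hG : ∀ k : ℕ, 0 < Real.Gamma (ν * k + γ) :=
    fun k => Real.Gamma_pos_of_pos (by positivity)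
  set M := max 1 ((2 * c) ^ α⁻¹) with hMdef
  have hM1 : (1:ℝ) ≤ M := le_max_left _ _
  have hM0 : (0:ℝ) < M := by linarith
  have hMα : 2 * c ≤ M ^ α := by
    rcases le_total (2 * c) 1 with h | h
    · calc 2 * c ≤ 1 := h
        _ = (1:ℝ) ^ α := (Real.one_rpow α).symm
        _ ≤ M ^ α := Real.rpow_le_rpow zero_le_one hM1 hα.le
    · have h' : (2 * c) ^ α⁻¹ ≤ M := le_max_right _ _
      calc 2 * c = ((2 * c) ^ α⁻¹) ^ α := by
            rw [← Real.rpow_mul (by positivity), inv_mul_cancel₀ hα.ne', Real.rpow_one]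
        _ ≤ M ^ α := Real.rpow_le_rpow (Real.rpow_nonneg (by positivity) _) h' hα.le
  set ν' := min ν 1 with hν'def
  have hν'0 : 0 < ν' := lt_min hν one_pos
  set T := max 2 ((2 * M) ^ ν'⁻¹) with hTdef
  have hev : ∀ᶠ k : ℕ in Filter.atTop, T ≤ ν * k + γ := by
    have h1 : Filter.Tendsto (fun k : ℕ => ν * k + γ) Filter.atTop Filter.atTop :=
      Filter.tendsto_atTop_add_const_right _ γ
        (tendsto_natCast_atTop_atTop.const_mul_atTop hν)
    exact h1.eventually_ge_atTop T
  refine summable_of_ratio_norm_eventually_le (r := 1/2) (by norm_num) ?_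
  filter_upwards [hev] with k hk
  have hx2 : (2:ℝ) ≤ ν * k + γ := le_trans (le_max_left _ _) hk
  have hx0 : (0:ℝ) < ν * k + γ := by linarith
  have hxT : (2 * M) ^ ν'⁻¹ ≤ ν * k + γ := le_trans (le_max_right _ _) hk
  have hx' : ν * ((k+1 : ℕ) : ℝ) + γ = (ν * k + γ) + ν := by push_cast; ring
  have hpow2M : 2 * M ≤ (ν * k + γ) ^ ν' := by
    calc 2 * M = ((2 * M) ^ ν'⁻¹) ^ ν' := by
          rw [← Real.rpow_mul (by positivity), inv_mul_cancel₀ hν'0.ne', Real.rpow_one]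
      _ ≤ (ν * k + γ) ^ ν' :=
          Real.rpow_le_rpow (Real.rpow_nonneg (by positivity) _) hxT hν'0.le
  have hGge : M * Real.Gamma (ν * k + γ) ≤ Real.Gamma ((ν * k + γ) + ν) := by
    have hgl := gamma_lower hν hx2
    rw [← hν'def] at hgl
    have h7 := mul_le_mul_of_nonneg_left hpow2M (hG k).le
    nlinarith [h7, hgl]
  have hGα : 2 * c * Real.Gamma (ν * k + γ) ^ α ≤ Real.Gamma ((ν * k + γ) + ν) ^ α := by
    calc 2 * c * Real.Gamma (ν * k + γ) ^ α
        ≤ M ^ α * Real.Gamma (ν * k + γ) ^ α :=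
          mul_le_mul_of_nonneg_right hMα (Real.rpow_nonneg (hG k).le _)
      _ = (M * Real.Gamma (ν * k + γ)) ^ α :=
          (Real.mul_rpow hM0.le (hG k).le).symm
      _ ≤ _ := Real.rpow_le_rpow (by positivity) hGge hα.le
  rw [Real.norm_of_nonneg (by positivity), Real.norm_of_nonneg (by positivity), hx']
  rcases hc.eq_or_lt with h | hc0
  · rw [← h]
    simp [zero_pow (Nat.succ_ne_zero k)]
    positivity
  · have hden : (0:ℝ) < 2 * c * Real.Gamma (ν * k + γ) ^ α := by positivity
    calc c ^ (k+1) / Real.Gamma ((ν * k + γ) + ν) ^ α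
        ≤ c ^ (k+1) / (2 * c * Real.Gamma (ν * k + γ) ^ α) := by
          gcongr
      _ = 1/2 * (c ^ k / Real.Gamma (ν * k + γ) ^ α) := by
          rw [pow_succ]
          field_simp

private lemma kernel_integral {p r : ℝ} (hp : 0 < p) (hr : 0 < r) :
    ∫ x in Set.Ioi (0:ℝ), Real.exp (-r * x) * x ^ (p - 1)
      = (1/r) ^ p * Real.Gamma p := by
  rw [← Real.integral_rpow_mul_exp_neg_mul_Ioi hp hr]
  refine setIntegral_congr_fun measurableSet_Ioi fun x hx => ?_
  rw [neg_mul, mul_comm]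

private lemma kernel_integrable {p r : ℝ} (hp : 0 < p) (hr : 0 < r) :
    IntegrableOn (fun x : ℝ => Real.exp (-r * x) * x ^ (p - 1)) (Set.Ioi 0) := by
  have h0 : IntegrableOn (fun x : ℝ => Real.exp (-x) * x ^ (p - 1)) (Set.Ioi 0) :=
    Real.GammaIntegral_convergent hp
  have h1 : IntegrableOn (fun x : ℝ => Real.exp (-(r * x)) * (r * x) ^ (p - 1))
      (Set.Ioi 0) := by
    have := (MeasureTheory.integrableOn_Ioi_comp_mul_left_iff
      (fun x : ℝ => Real.exp (-x) * x ^ (p - 1)) 0 hr).2 (by simpa using h0)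
    simpa using this
  have h2 : IntegrableOn
      (fun x : ℝ => (r ^ (p - 1))⁻¹ * (Real.exp (-(r * x)) * (r * x) ^ (p - 1)))
      (Set.Ioi 0) := h1.const_mul _
  refine IntegrableOn.congr_fun h2 (fun x hx => ?_) measurableSet_Ioi
  have hx0 : (0:ℝ) < x := hx
  rw [Real.mul_rpow hr.le hx0.le, neg_mul]
  field_simp [(Real.rpow_pos_of_pos hr (p-1)).ne']

private lemma alg_aux {ν γ α s : ℝ} (hs : 0 < s) (l : ℝ) (k : ℕ)
    (hG : 0 < Real.Gamma (ν * k + γ)) :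
    l ^ k / Real.Gamma (ν * k + γ) ^ (α + 1)
        * ((1/s) ^ (ν * k + γ) * Real.Gamma (ν * k + γ))
      = s ^ (-γ) * ((l / s ^ ν) ^ k / Real.Gamma (ν * k + γ) ^ α) := by
  have e1 : ((1:ℝ)/s) ^ (ν * k + γ) = (s ^ (ν * (k:ℝ)))⁻¹ * (s ^ γ)⁻¹ := by
    rw [Real.rpow_add (by positivity), one_div, Real.inv_rpow hs.le, Real.inv_rpow hs.le]
  have e2 : Real.Gamma (ν * k + γ) ^ (α + 1)
      = Real.Gamma (ν * k + γ) ^ α * Real.Gamma (ν * k + γ) :=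
    Real.rpow_add_one hG.ne' α
  have e3 : (l / s ^ ν) ^ k = l ^ k / s ^ (ν * (k:ℝ)) := by
    rw [div_pow, Real.rpow_mul hs.le, Real.rpow_natCast]
  rw [e1, e2, e3, Real.rpow_neg hs.le]
  have h1 : s ^ (ν * (k:ℝ)) ≠ 0 := (Real.rpow_pos_of_pos hs _).ne'
  have h2 : (s:ℝ) ^ γ ≠ 0 := (Real.rpow_pos_of_pos hs _).ne'
  have h3 : Real.Gamma (ν * k + γ) ^ α ≠ 0 := (Real.rpow_pos_of_pos hG _).ne'
  field_simp

/-- Laplace transform of the α-Mittag--Leffler function: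
∫₀^∞ e^{-sx} x^{γ-1} E_{α;ν,γ}(λ xᶺν) dx = s^{-γ} E_{α-1;ν,γ}(λ/sᶺν). -/
theorem laplace_alpha_mittag_leffler (α ν γ lam s : ℝ)
    (hα : α > 0) (hν : ν > 0) (hγ : γ > 0) (hs : s > 0) :
    ∫ x in Set.Ioi (0 : ℝ),
        Real.exp (-s * x) * x ^ (γ - 1) *
          ∑' k : ℕ, (lam * x ^ ν) ^ k / (Real.Gamma (ν * k + γ)) ^ (α + 1)
      = s ^ (-γ) * ∑' k : ℕ, (lam / s ^ ν) ^ k / (Real.Gamma (ν * k + γ)) ^ α := by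
  have hG : ∀ k : ℕ, 0 < Real.Gamma (ν * k + γ) :=
    fun k => Real.Gamma_pos_of_pos (by positivity)
  have hp : ∀ k : ℕ, (0:ℝ) < ν * k + γ := fun k => by positivity
  set F : ℕ → ℝ → ℝ := fun k x =>
    lam ^ k / Real.Gamma (ν * k + γ) ^ (α + 1)
      * (Real.exp (-s * x) * x ^ (ν * k + γ - 1)) with hF
  have hInt : ∀ k, IntegrableOn (F k) (Set.Ioi 0) :=
    fun k => (kernel_integrable (hp k) hs).const_mul _
  have hIval : ∀ k, ∫ x in Set.Ioi (0:ℝ), F k x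
      = lam ^ k / Real.Gamma (ν * k + γ) ^ (α + 1)
        * ((1/s) ^ (ν * k + γ) * Real.Gamma (ν * k + γ)) := fun k => by
    rw [hF]
    rw [MeasureTheory.integral_const_mul, kernel_integral (hp k) hs]
  have hnormval : ∀ k, ∫ x in Set.Ioi (0:ℝ), ‖F k x‖
      = |lam| ^ k / Real.Gamma (ν * k + γ) ^ (α + 1)
        * ((1/s) ^ (ν * k + γ) * Real.Gamma (ν * k + γ)) := fun k => by
    have : ∀ x ∈ Set.Ioi (0:ℝ), ‖F k x‖
        = |lam| ^ k / Real.Gamma (ν * k + γ) ^ (α + 1)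
          * (Real.exp (-s * x) * x ^ (ν * k + γ - 1)) := by
      intro x hx
      have hx0 : (0:ℝ) < x := hx
      rw [hF]
      rw [Real.norm_eq_abs, abs_mul, abs_div, abs_pow,
        abs_of_pos (Real.rpow_pos_of_pos (hG k) _),
        abs_of_pos (by positivity : (0:ℝ) < Real.exp (-s * x) * x ^ (ν * k + γ - 1))]
    rw [setIntegral_congr_fun measurableSet_Ioi this,
      MeasureTheory.integral_const_mul, kernel_integral (hp k) hs]
  have hSumNorm : Summable (fun k => ∫ x in Set.Ioi (0:ℝ), ‖F k x‖) := by
    have heq : (fun k : ℕ => ∫ x in Set.Ioi (0:ℝ), ‖F k x‖)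
        = fun k : ℕ => s ^ (-γ) * ((|lam| / s ^ ν) ^ k / Real.Gamma (ν * k + γ) ^ α) := by
      funext k
      rw [hnormval k, alg_aux hs _ k (hG k)]
    rw [heq]
    exact (summable_aux hν hγ hα (by positivity : (0:ℝ) ≤ |lam| / s ^ ν)).mul_left _
  calc
    ∫ x in Set.Ioi (0 : ℝ),
        Real.exp (-s * x) * x ^ (γ - 1) *
          ∑' k : ℕ, (lam * x ^ ν) ^ k / (Real.Gamma (ν * k + γ)) ^ (α + 1)
        = ∫ x in Set.Ioi (0:ℝ), ∑' k : ℕ, F k x := by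
          refine setIntegral_congr_fun measurableSet_Ioi fun x hx => ?_
          have hx0 : (0:ℝ) < x := hx
          rw [← tsum_mul_left]
          refine tsum_congr fun k => ?_
          have e1 : (lam * x ^ ν) ^ k = lam ^ k * x ^ (ν * (k:ℝ)) := by
            rw [mul_pow, Real.rpow_mul hx0.le, Real.rpow_natCast]
          have e2 : x ^ (ν * (k:ℝ) + γ - 1) = x ^ (ν * (k:ℝ)) * x ^ (γ - 1) := by
            rw [← Real.rpow_add hx0]; ring_nf
          simp only [hF, e1, e2]
          ring
      _ = ∑' k : ℕ, ∫ x in Set.Ioi (0:ℝ), F k x :=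
          (integral_tsum_of_summable_integral_norm hInt hSumNorm).symm
      _ = ∑' k : ℕ, s ^ (-γ) * ((lam / s ^ ν) ^ k / Real.Gamma (ν * k + γ) ^ α) := by
          refine tsum_congr fun k => ?_
          rw [hIval k, alg_aux hs _ k (hG k)]
      _ = s ^ (-γ) * ∑' k : ℕ, (lam / s ^ ν) ^ k / (Real.Gamma (ν * k + γ)) ^ α :=
          tsum_mul_left
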